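/- Let ι be a nonempty index set and A, B, C : ι → ℱ families of measurable events such that μ(B(x) ∩ C(x)) > 0 and μ(B(x) ∩ (C(x))ᶜ) > 0 for every x ∈ ι. Then inf_{x∈ι} μ(A(x) | B(x) ∩ (C(x))ᶜ) ≥ [ inf_{x∈ι} μ(A(x) | B(x)) − ( sup_{x∈ι} μ(A(x) | B(x) ∩ C(x)) ) · ( sup_{x∈ι} μ(C(x) | B(x)) ) ] / ( 1 − inf_{x∈ι} μ(C(x) | B(x)) ). -/
import Mathlib


open MeasureTheory
set_option maxHeartbeats 1000000

/-- Conditional probability `μ(E | F) = μ(E ∩ F) / μ(F)`, as a real number. -/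
noncomputable def condP {Ω : Type*} [MeasurableSpace Ω] (μ : Measure Ω)
    (E F : Set Ω) : ℝ :=
  (μ (E ∩ F)).toReal / (μ F).toReal

theorem iInf_condProb_inter_compl_ge
    {Ω : Type*} [MeasurableSpace Ω] (μ : Measure Ω) [IsProbabilityMeasure μ]
    {ι : Type*} [Nonempty ι]
    (A B C : ι → Set Ω)
    (hA : ∀ x, MeasurableSet (A x)) (hB : ∀ x, MeasurableSet (B x))
    (hC : ∀ x, MeasurableSet (C x))
    (hBC : ∀ x, 0 < (μ (B x ∩ C x)).toReal)
    (hBCc : ∀ x, 0 < (μ (B x ∩ (C x)ᶜ)).toReal) :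
    (⨅ x, condP μ (A x) (B x ∩ (C x)ᶜ))
      ≥ ((⨅ x, condP μ (A x) (B x))
          - (⨆ x, condP μ (A x) (B x ∩ C x)) * (⨆ x, condP μ (C x) (B x)))
        / (1 - ⨅ x, condP μ (C x) (B x)) := by
  have hfin : ∀ S : Set Ω, μ S ≠ ⊤ := fun S => measure_ne_top μ S
  have toReal_mono : ∀ {S T : Set Ω}, S ⊆ T → (μ S).toReal ≤ (μ T).toReal :=
    fun h => ENNReal.toReal_mono (hfin _) (measure_mono h)
  have hb : ∀ x, 0 < (μ (B x)).toReal :=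
    fun x => (hBC x).trans_le (toReal_mono Set.inter_subset_left)
  have hnn : ∀ E F : Set Ω, 0 ≤ condP μ E F :=
    fun E F => div_nonneg ENNReal.toReal_nonneg ENNReal.toReal_nonneg
  have hle1 : ∀ E F : Set Ω, condP μ E F ≤ 1 :=
    fun E F => div_le_one_of_le₀ (toReal_mono Set.inter_subset_right) ENNReal.toReal_nonneg
  have bddA : ∀ E F : ι → Set Ω, BddAbove (Set.range fun x => condP μ (E x) (F x)) :=
    fun E F => ⟨1, by rintro _ ⟨x, rfl⟩; exact hle1 _ _⟩
  have bddB : ∀ E F : ι → Set Ω, BddBelow (Set.range fun x => condP μ (E x) (F x)) :=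
    fun E F => ⟨0, by rintro _ ⟨x, rfl⟩; exact hnn _ _⟩
  -- splitting of measures
  have hsplitB : ∀ x, (μ (B x)).toReal
      = (μ (B x ∩ C x)).toReal + (μ (B x ∩ (C x)ᶜ)).toReal := by
    intro x
    rw [← ENNReal.toReal_add (hfin _) (hfin _)]
    congr 1
    have := measure_inter_add_diff (B x) (hC x) (μ := μ)
    rw [Set.diff_eq] at this
    exact this.symm
  have hsplitA : ∀ x, (μ (A x ∩ B x)).toReal
      = (μ (A x ∩ B x ∩ C x)).toReal + (μ (A x ∩ B x ∩ (C x)ᶜ)).toReal := by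
    intro x
    rw [← ENNReal.toReal_add (hfin _) (hfin _)]
    congr 1
    have := measure_inter_add_diff (A x ∩ B x) (hC x) (μ := μ)
    rw [Set.diff_eq] at this
    exact this.symm
  -- r x < 1
  have hrlt1 : ∀ x, condP μ (C x) (B x) < 1 := by
    intro x
    rw [condP, Set.inter_comm, div_lt_one (hb x)]
    have := hBCc x
    linarith [hsplitB x]
  -- 1 - ⨅ r > 0
  obtain ⟨x₀⟩ := ‹Nonempty ι›
  have hρ : (⨅ x, condP μ (C x) (B x)) < 1 :=
    lt_of_le_of_lt (ciInf_le (bddB C B) x₀) (hrlt1 x₀)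
  have hρpos : 0 < 1 - ⨅ x, condP μ (C x) (B x) := by linarith
  rw [ge_iff_le]
  refine le_ciInf fun x => ?_
  by_cases hN : (⨅ x, condP μ (A x) (B x))
      - (⨆ x, condP μ (A x) (B x ∩ C x)) * (⨆ x, condP μ (C x) (B x)) ≤ 0
  · exact le_trans (div_nonpos_iff.mpr (Or.inr ⟨hN, le_of_lt hρpos⟩)) (hnn _ _)
  push_neg at hN
  -- total probability identity for this x
  have hq : condP μ (A x) (B x ∩ C x)
      = (μ (A x ∩ B x ∩ C x)).toReal / (μ (B x ∩ C x)).toReal := by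
    rw [condP, Set.inter_assoc]
  have hr' : condP μ (C x) (B x)
      = (μ (B x ∩ C x)).toReal / (μ (B x)).toReal := by
    rw [condP, Set.inter_comm]
  have hs' : condP μ (A x) (B x ∩ (C x)ᶜ)
      = (μ (A x ∩ B x ∩ (C x)ᶜ)).toReal / (μ (B x ∩ (C x)ᶜ)).toReal := by
    rw [condP, Set.inter_assoc]
  have hp' : condP μ (A x) (B x)
      = ((μ (A x ∩ B x ∩ C x)).toReal + (μ (A x ∩ B x ∩ (C x)ᶜ)).toReal)
        / (μ (B x)).toReal := by
    rw [condP, hsplitA]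
  have hid : condP μ (A x) (B x ∩ (C x)ᶜ) * (1 - condP μ (C x) (B x))
      = condP μ (A x) (B x) - condP μ (A x) (B x ∩ C x) * condP μ (C x) (B x) := by
    rw [hq, hr', hs', hp']
    have h1 := hBC x
    have h2 := hBCc x
    have h3 := hb x
    field_simp
    rw [hsplitB x]
    ring
  -- bounds
  have hQ0 : 0 ≤ ⨆ x, condP μ (A x) (B x ∩ C x) :=
    le_trans (hnn _ _) (le_ciSup (bddA A (fun y => B y ∩ C y)) x₀)
  have hR0 : 0 ≤ ⨆ x, condP μ (C x) (B x) :=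
    le_trans (hnn _ _) (le_ciSup (bddA C B) x₀)
  have hPle : (⨅ x, condP μ (A x) (B x)) ≤ condP μ (A x) (B x) := ciInf_le (bddB A B) x
  have hqle : condP μ (A x) (B x ∩ C x) ≤ ⨆ x, condP μ (A x) (B x ∩ C x) :=
    le_ciSup (bddA A (fun y => B y ∩ C y)) x
  have hrle : condP μ (C x) (B x) ≤ ⨆ x, condP μ (C x) (B x) := le_ciSup (bddA C B) x
  have hρle : (⨅ x, condP μ (C x) (B x)) ≤ condP μ (C x) (B x) := ciInf_le (bddB C B) x
  have key : (⨅ x, condP μ (A x) (B x))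
      - (⨆ x, condP μ (A x) (B x ∩ C x)) * (⨆ x, condP μ (C x) (B x))
      ≤ condP μ (A x) (B x ∩ (C x)ᶜ) * (1 - condP μ (C x) (B x)) := by
    rw [hid]
    have hmul : condP μ (A x) (B x ∩ C x) * condP μ (C x) (B x)
        ≤ (⨆ x, condP μ (A x) (B x ∩ C x)) * (⨆ x, condP μ (C x) (B x)) :=
      mul_le_mul hqle hrle (hnn _ _) hQ0
    linarith
  have hrx1 : 0 < 1 - condP μ (C x) (B x) := by linarith [hrlt1 x]
  calc ((⨅ x, condP μ (A x) (B x))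
          - (⨆ x, condP μ (A x) (B x ∩ C x)) * (⨆ x, condP μ (C x) (B x)))
        / (1 - ⨅ x, condP μ (C x) (B x))
      ≤ ((⨅ x, condP μ (A x) (B x))
          - (⨆ x, condP μ (A x) (B x ∩ C x)) * (⨆ x, condP μ (C x) (B x)))
        / (1 - condP μ (C x) (B x)) := by
        apply div_le_div_of_nonneg_left (le_of_lt hN) hrx1
        linarith
    _ ≤ condP μ (A x) (B x ∩ (C x)ᶜ) := (div_le_iff₀ hrx1).mpr key
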